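/- Let d : [κ⁺]^2 → λ be transitive and let B ⊆ γ be a set of order type λ⁺ cofinal in γ with sup d''[B]^2 ≤ η₀ < λ. Let A ⊆ γ be cofinal of order type λ⁺. Then there exist A' ⊆ A of cardinality λ⁺ and η* < λ such that d(α, α') ≤ η* for all α < α' in A'. -/

import Mathlib

open Ordinal Set Cardinal

/-- Interleaving/pigeonhole step: if `d` is transitive on pairs below `κ⁺`,
`B ⊆ γ` is cofinal of order type `λ⁺` with `d` bounded by `η₀ < λ` on pairs from
`B`, and `A ⊆ γ` is cofinal of order type `λ⁺`, then there is `A' ⊆ A` of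
cardinality `λ⁺` and `η* < λ` with `d(α,α') ≤ η*` for all `α < α'` in `A'`. -/
theorem transitive_interleave (κ lam : Cardinal.{0})
    (hlamreg : lam.IsRegular) (hlam : lam < κ)
    (γ : Ordinal) (hγ : γ < (Order.succ κ).ord)
    (hγcof : γ.cof = Order.succ lam)
    (d : Ordinal → Ordinal → Ordinal)
    (hval : ∀ α β, α < β → β < (Order.succ κ).ord → d α β < lam.ord)
    (htrans : ∀ α γ' β, α < γ' → γ' < β → β < (Order.succ κ).ord →
      d α β ≤ max (d α γ') (d γ' β))
    -- B, enumerated by b, is cofinal in γ of order type λ⁺ with d ≤ η₀ on its pairs :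
    (b : Ordinal → Ordinal) (hb : StrictMonoOn b (Set.Iio (Order.succ lam).ord))
    (hbγ : ∀ i < (Order.succ lam).ord, b i < γ)
    (hbcof : ∀ x < γ, ∃ i < (Order.succ lam).ord, x < b i)
    (η₀ : Ordinal) (hη₀ : η₀ < lam.ord)
    (hBbdd : ∀ i j, i < j → j < (Order.succ lam).ord → d (b i) (b j) ≤ η₀)
    -- A, enumerated by a, is cofinal in γ of order type λ⁺ :
    (a : Ordinal → Ordinal) (ha : StrictMonoOn a (Set.Iio (Order.succ lam).ord))
    (haγ : ∀ i < (Order.succ lam).ord, a i < γ)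
    (hacof : ∀ x < γ, ∃ i < (Order.succ lam).ord, x < a i) :
    ∃ I : Set Ordinal, I ⊆ Set.Iio (Order.succ lam).ord ∧
      #I = Cardinal.lift.{1} (Order.succ lam) ∧
      ∃ ηstar < lam.ord, ∀ i ∈ I, ∀ j ∈ I, i < j → d (a i) (a j) ≤ ηstar := by
  set Λ := (Order.succ lam).ord with hΛdef
  have hlaminf : ℵ₀ ≤ lam := hlamreg.aleph0_le
  have hsuccreg : (Order.succ lam).IsRegular := isRegular_succ hlaminf
  have hcofΛ : Λ.cof = Order.succ lam := hsuccreg.cof_eq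
  have hΛlim : Order.IsSuccLimit Λ := Cardinal.isSuccLimit_ord (hlaminf.trans (Order.le_succ _))
  have hsucc1 : ∀ ξ < Λ, ξ + 1 < Λ := fun ξ hξ => by
    rw [Ordinal.add_one_eq_succ]; exact hΛlim.succ_lt hξ
  have hs11 : ∀ {x y : Ordinal}, x < y → x + 1 < y + 1 := by
    intro x y h
    rw [Ordinal.add_one_eq_succ, Ordinal.add_one_eq_succ]
    exact Order.succ_lt_succ h
  have hγκ : ∀ x, x < γ → x < (Order.succ κ).ord := fun x hx => hx.trans hγ
  -- the index function sending i to the least index of a member of B above `a i`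
  set fI : Ordinal → Ordinal := fun i => sInf {j | j < Λ ∧ a i < b j} with hfIdef
  have hfI : ∀ i, i < Λ → fI i < Λ ∧ a i < b (fI i) := by
    intro i hi
    have hne : {j | j < Λ ∧ a i < b j}.Nonempty := by
      obtain ⟨j, hj1, hj2⟩ := hbcof (a i) (haγ i hi)
      exact ⟨j, hj1, hj2⟩
    exact csInf_mem hne
  have hfImono : ∀ i i', i < Λ → i' < Λ → i ≤ i' → fI i ≤ fI i' := by
    intro i i' hi hi' hle
    apply csInf_le_csInf (OrderBot.bddBelow _)
    · obtain ⟨j, hj1, hj2⟩ := hbcof (a i') (haγ i' hi')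
      exact ⟨j, hj1, hj2⟩
    · rintro j ⟨hj1, hj2⟩
      refine ⟨hj1, lt_of_le_of_lt ?_ hj2⟩
      rcases hle.lt_or_eq with h | h
      · exact (ha hi hi' h).le
      · rw [h]
  -- the interleaved sequence of indices into A
  let t : Ordinal.{0} → Ordinal.{0} := WellFounded.fix (C := fun _ => Ordinal) wellFounded_lt
    (fun ξ ih => sInf {i | i < Λ ∧ ∀ ξ' (h : ξ' < ξ), ih ξ' h < i ∧ b (fI (ih ξ' h)) < a i})
  have ht_eq : ∀ ξ, t ξ = sInf {i | i < Λ ∧ ∀ ξ' < ξ, t ξ' < i ∧ b (fI (t ξ')) < a i} :=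
    fun ξ => WellFounded.fix_eq _ _ _
  have key : ∀ ξ, ξ < Λ → t ξ < Λ ∧ ∀ ξ' < ξ, t ξ' < t ξ ∧ b (fI (t ξ')) < a (t ξ) := by
    intro ξ
    induction ξ using Ordinal.induction with
    | _ ξ IH =>
      intro hξ
      have hne : {i | i < Λ ∧ ∀ ξ' < ξ, t ξ' < i ∧ b (fI (t ξ')) < a i}.Nonempty := by
        have hcard : ξ.card < Order.succ lam := Cardinal.lt_ord.mp (hΛdef ▸ hξ)
        have h1 : ∀ ξ' (h : ξ' < ξ), t ξ' < Λ := fun ξ' h => (IH ξ' h (h.trans hξ)).1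
        have hβ₁γ : Ordinal.bsup ξ (fun ξ' h => b (fI (t ξ'))) < γ := by
          apply Ordinal.bsup_lt_ord (by rwa [hγcof])
          intro ξ' h
          exact hbγ _ (hfI _ (h1 ξ' h)).1
        obtain ⟨i₀, hi₀Λ, hi₀⟩ := hacof _ hβ₁γ
        have hβ₂Λ : Ordinal.bsup ξ (fun ξ' h => t ξ' + 1) < Λ := by
          apply Ordinal.bsup_lt_ord (by rw [hcofΛ]; exact hcard)
          intro ξ' h
          exact hsucc1 _ (h1 ξ' h)
        refine ⟨max i₀ (Ordinal.bsup ξ (fun ξ' h => t ξ' + 1)),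
          max_lt hi₀Λ hβ₂Λ, fun ξ' h => ⟨?_, ?_⟩⟩
        · calc t ξ' < t ξ' + 1 := lt_add_one _
            _ ≤ Ordinal.bsup ξ (fun ξ' h => t ξ' + 1) := Ordinal.le_bsup _ ξ' h
            _ ≤ _ := le_max_right _ _
        · have h2 : b (fI (t ξ')) ≤ Ordinal.bsup ξ (fun ξ' h => b (fI (t ξ'))) :=
            Ordinal.le_bsup _ ξ' h
          have h3 : a i₀ ≤ a (max i₀ (Ordinal.bsup ξ (fun ξ' h => t ξ' + 1))) := by
            rcases (le_max_left i₀ (Ordinal.bsup ξ (fun ξ' h => t ξ' + 1))).lt_or_eq with h' | h'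
            · exact (ha hi₀Λ (max_lt hi₀Λ hβ₂Λ) h').le
            · rw [← h']
          exact lt_of_le_of_lt h2 (hi₀.trans_le h3)
      rw [ht_eq ξ]
      exact csInf_mem hne
  have htΛ : ∀ ξ, ξ < Λ → t ξ < Λ := fun ξ h => (key ξ h).1
  have htlt : ∀ ξ' ξ, ξ' < ξ → ξ < Λ → t ξ' < t ξ := fun ξ' ξ h hξ => ((key ξ hξ).2 ξ' h).1
  have htb : ∀ ξ' ξ, ξ' < ξ → ξ < Λ → b (fI (t ξ')) < a (t ξ) :=
    fun ξ' ξ h hξ => ((key ξ hξ).2 ξ' h).2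
  -- the value function for the pigeonhole argument
  set val : Ordinal → Ordinal := fun ξ =>
    max (d (a (t (ξ+1))) (b (fI (t (ξ+1))))) (d (b (fI (t ξ))) (a (t (ξ+1)))) with hvaldef
  have hvallt : ∀ ξ, ξ ∈ Set.Iio Λ → val ξ < lam.ord := by
    intro ξ hξ
    have hξ1 : ξ + 1 < Λ := hsucc1 ξ hξ
    have h1 : t (ξ+1) < Λ := htΛ _ hξ1
    apply max_lt
    · exact hval _ _ (hfI _ h1).2 (hγκ _ (hbγ _ (hfI _ h1).1))
    · exact hval _ _ (htb ξ (ξ+1) (lt_add_one _) hξ1) (hγκ _ (haγ _ h1))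
  have hmkΛ : #(Set.Iio Λ) = Cardinal.lift.{1} (Order.succ lam) := by
    rw [hΛdef, Ordinal.mk_Iio_ordinal, Cardinal.card_ord]
  obtain ⟨v, T, hTsub, hTcard, hTval⟩ :=
    Cardinal.infinite_pigeonhole_set (s := Set.Iio Λ) (α := ↥(Set.Iio lam.ord))
      (fun ξ => (⟨val ξ.1, hvallt ξ.1 ξ.2⟩ : ↥(Set.Iio lam.ord)))
      (Cardinal.lift.{1} (Order.succ lam)) (le_of_eq hmkΛ.symm)
      (by rw [Cardinal.aleph0_le_lift]; exact hlaminf.trans (Order.le_succ _))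
      (by
        rw [Ordinal.mk_Iio_ordinal, Cardinal.card_ord, ← Cardinal.lift_ord, ← Ordinal.lift_cof,
          hcofΛ]
        exact Cardinal.lift_lt.mpr (Order.lt_succ _))
  have hTΛ : ∀ ξ ∈ T, ξ < Λ := fun ξ h => hTsub h
  have hvalv : ∀ ξ (h : ξ ∈ T), val ξ = v.1 := fun ξ h => congrArg Subtype.val (hTval h)
  refine ⟨(fun ξ => t (ξ+1)) '' T, ?_, ?_, max η₀ v.1, max_lt hη₀ v.2, ?_⟩
  · rintro x ⟨ξ, hξT, rfl⟩
    exact htΛ _ (hsucc1 _ (hTΛ _ hξT))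
  · have hinj : Set.InjOn (fun ξ => t (ξ+1)) T := by
      intro ξ hξ ζ hζ hEq
      dsimp only at hEq
      rcases lt_trichotomy ξ ζ with h | h | h
      · exact absurd hEq (htlt _ _ (hs11 h) (hsucc1 _ (hTΛ _ hζ))).ne
      · exact h
      · exact absurd hEq.symm (htlt _ _ (hs11 h) (hsucc1 _ (hTΛ _ hξ))).ne
    rw [Cardinal.mk_image_eq_of_injOn _ _ hinj]
    exact le_antisymm ((Cardinal.mk_le_mk_of_subset hTsub).trans hmkΛ.le) hTcard
  · rintro x ⟨ξ, hξT, rfl⟩ y ⟨ζ, hζT, rfl⟩ hlt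
    dsimp only at hlt ⊢
    have hξΛ : ξ < Λ := hTΛ _ hξT
    have hζΛ : ζ < Λ := hTΛ _ hζT
    have hξ1 : ξ + 1 < Λ := hsucc1 _ hξΛ
    have hζ1 : ζ + 1 < Λ := hsucc1 _ hζΛ
    have hξζ : ξ < ζ := by
      rcases lt_trichotomy ξ ζ with h | h | h
      · exact h
      · subst h; exact absurd hlt (lt_irrefl _)
      · exact absurd (htlt _ _ (hs11 h) hξ1) (not_lt_of_gt hlt)
    have htξ1Λ : t (ξ+1) < Λ := htΛ _ hξ1
    have htζΛ : t ζ < Λ := htΛ _ hζΛ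
    have htζ1Λ : t (ζ+1) < Λ := htΛ _ hζ1
    have hfIξ1 := hfI _ htξ1Λ
    have hfIζ := hfI _ htζΛ
    have hB1A2 : b (fI (t (ξ+1))) < a (t (ζ+1)) := htb _ _ (hs11 hξζ) hζ1
    have hB2A2 : b (fI (t ζ)) < a (t (ζ+1)) := htb _ _ (lt_add_one _) hζ1
    have hA2κ : a (t (ζ+1)) < (Order.succ κ).ord := hγκ _ (haγ _ htζ1Λ)
    have step1 : d (a (t (ξ+1))) (a (t (ζ+1))) ≤
        max (d (a (t (ξ+1))) (b (fI (t (ξ+1))))) (d (b (fI (t (ξ+1)))) (a (t (ζ+1)))) :=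
      htrans _ _ _ hfIξ1.2 hB1A2 hA2κ
    have hleft : d (a (t (ξ+1))) (b (fI (t (ξ+1)))) ≤ v.1 := by
      rw [← hvalv ξ hξT]; exact le_max_left _ _
    have hright2 : d (b (fI (t ζ))) (a (t (ζ+1))) ≤ v.1 := by
      rw [← hvalv ζ hζT]; exact le_max_right _ _
    have hidx : fI (t (ξ+1)) ≤ fI (t ζ) := by
      have h1 : ξ + 1 ≤ ζ := by
        rw [Ordinal.add_one_eq_succ]; exact Order.succ_le_of_lt hξζ
      rcases h1.lt_or_eq with h | h
      · exact hfImono _ _ htξ1Λ htζΛ (htlt _ _ h hζΛ).le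
      · rw [h]
    have hright : d (b (fI (t (ξ+1)))) (a (t (ζ+1))) ≤ max η₀ v.1 := by
      rcases hidx.lt_or_eq with h | h
      · have hBB : d (b (fI (t (ξ+1)))) (b (fI (t ζ))) ≤ η₀ := hBbdd _ _ h hfIζ.1
        have hB1B2 : b (fI (t (ξ+1))) < b (fI (t ζ)) := hb hfIξ1.1 hfIζ.1 h
        exact (htrans _ _ _ hB1B2 hB2A2 hA2κ).trans
          (max_le (hBB.trans (le_max_left _ _)) (hright2.trans (le_max_right _ _)))
      · rw [h]; exact hright2.trans (le_max_right _ _)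
    exact step1.trans (max_le (hleft.trans (le_max_right _ _)) hright)
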